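/- Let n ≥ 8 and let F₂ be the 4-graph on [n] with edge set {{1,2,i,j} : 3 ≤ i < j ≤ n} ∪ {{1,3,4,k} : 5 ≤ k ≤ n} ∪ {{1,3,l,m} : 5 ≤ l < m ≤ 7} ∪ {{1,4,l,m} : 5 ≤ l < m ≤ 7} ∪ {{1,5,6,7}} ∪ {{2,3,4,k} : 5 ≤ k ≤ n} ∪ {{2,3,l,m} : 5 ≤ l < m ≤ 7} ∪ {{2,4,l,m} : 5 ≤ l < m ≤ 7}. Then λ(F₂) ≤ 1/64 < 0.0169. -/

import Mathlib

open Finset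

/-- The Lagrangian of a hypergraph `G` with vertex set `[n] = {1, …, n}`. -/
noncomputable def lagN (n : ℕ) (G : Finset (Finset ℕ)) : ℝ :=
  sSup {v : ℝ | ∃ x : ℕ → ℝ, (∀ i, 0 ≤ x i) ∧ (∑ i ∈ Finset.Icc 1 n, x i) = 1 ∧
    v = ∑ e ∈ G, ∏ i ∈ e, x i}

/-- The edges `{a, b, i, j}` over all 2-element subsets `{i, j}` of `s`. -/
def pairsWith (a b : ℕ) (s : Finset ℕ) : Finset (Finset ℕ) :=
  (s.powersetCard 2).image (fun p => insert a (insert b p))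

/-- The edges `{a, i, j, k}` over all 3-element subsets `{i, j, k}` of `s`. -/
def triplesWith (a : ℕ) (s : Finset ℕ) : Finset (Finset ℕ) :=
  (s.powersetCard 3).image (insert a)

/-- The edges `{a, b, c, k}` over all `k ∈ s`. -/
def singlesWith (a b c : ℕ) (s : Finset ℕ) : Finset (Finset ℕ) :=
  s.image (fun k => ({a, b, c, k} : Finset ℕ))

/-- The 4-graph `F₂` on `[n]`. -/
def F2 (n : ℕ) : Finset (Finset ℕ) :=
  pairsWith 1 2 (Finset.Icc 3 n) ∪ singlesWith 1 3 4 (Finset.Icc 5 n) ∪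
    pairsWith 1 3 (Finset.Icc 5 7) ∪ pairsWith 1 4 (Finset.Icc 5 7) ∪
    {({1, 5, 6, 7} : Finset ℕ)} ∪ singlesWith 2 3 4 (Finset.Icc 5 n) ∪
    pairsWith 2 3 (Finset.Icc 5 7) ∪ pairsWith 2 4 (Finset.Icc 5 7)

/- ### Auxiliary lemmas -/

lemma sum_union_le' {α : Type*} [DecidableEq α] {s t : Finset α} {f : α → ℝ}
    (hf : ∀ e, 0 ≤ f e) : ∑ e ∈ s ∪ t, f e ≤ ∑ e ∈ s, f e + ∑ e ∈ t, f e := by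
  have h := Finset.sum_union_inter (s₁ := s) (s₂ := t) (f := f)
  have h2 : 0 ≤ ∑ e ∈ s ∩ t, f e := Finset.sum_nonneg fun i _ => hf i
  linarith

lemma sum_image_le' {α β : Type*} [DecidableEq α] [DecidableEq β] {s : Finset α}
    {g : α → β} {f : β → ℝ}
    (hf : ∀ e, 0 ≤ f e) : ∑ e ∈ s.image g, f e ≤ ∑ p ∈ s, f (g p) := by
  induction s using Finset.induction_on with
  | empty => simp
  | @insert a s ha ih =>
      rw [Finset.image_insert, Finset.sum_insert ha]
      by_cases h : g a ∈ s.image g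
      · rw [Finset.insert_eq_self.2 h]
        have := hf (g a); linarith
      · rw [Finset.sum_insert h]; linarith

lemma e2_le (x : ℕ → ℝ) (hx : ∀ i, 0 ≤ x i) (s : Finset ℕ) :
    ∑ p ∈ s.powersetCard 2, ∏ i ∈ p, x i ≤ (∑ i ∈ s, x i)^2 / 2 := by
  induction s using Finset.induction_on with
  | empty =>
      rw [show (∅ : Finset ℕ).powersetCard 2 = ∅ by simp]
      simp
  | @insert a s ha ih =>
      rw [Finset.powersetCard_succ_insert ha, Finset.sum_insert ha]
      have h1 : ∑ e ∈ (s.powersetCard 1).image (insert a), ∏ i ∈ e, x i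
          ≤ ∑ p ∈ s.powersetCard 1, ∏ i ∈ insert a p, x i :=
        sum_image_le' (fun e => Finset.prod_nonneg fun i _ => hx i)
      have h2 : ∑ p ∈ s.powersetCard 1, ∏ i ∈ insert a p, x i = x a * ∑ i ∈ s, x i := by
        rw [Finset.powersetCard_one, Finset.sum_map, Finset.mul_sum]
        refine Finset.sum_congr rfl fun i hi => ?_
        have hai : a ∉ ({i} : Finset ℕ) := by
          simp only [Finset.mem_singleton]
          rintro rfl; exact ha hi
        simp only [Function.Embedding.coeFn_mk]
        rw [Finset.prod_insert hai, Finset.prod_singleton]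
      have h3 := sum_union_le' (s := s.powersetCard 2)
        (t := (s.powersetCard 1).image (insert a))
        (f := fun e => ∏ i ∈ e, x i) (fun e => Finset.prod_nonneg fun i _ => hx i)
      have hxa := hx a
      have hs : 0 ≤ ∑ i ∈ s, x i := Finset.sum_nonneg fun i _ => hx i
      nlinarith [sq_nonneg (x a)]

lemma pairsWith_le (x : ℕ → ℝ) (hx : ∀ i, 0 ≤ x i) (a b : ℕ) (t : Finset ℕ)
    (hab : a ≠ b) (hat : a ∉ t) (hbt : b ∉ t) :
    ∑ e ∈ pairsWith a b t, ∏ i ∈ e, x i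
      ≤ x a * x b * ∑ p ∈ t.powersetCard 2, ∏ i ∈ p, x i := by
  refine le_trans (sum_image_le' (fun e => Finset.prod_nonneg fun i _ => hx i)) ?_
  rw [Finset.mul_sum]
  refine le_of_eq (Finset.sum_congr rfl fun p hp => ?_)
  have hpt : p ⊆ t := (Finset.mem_powersetCard.1 hp).1
  have hbp : b ∉ p := fun h => hbt (hpt h)
  have hap : a ∉ insert b p := by
    simp only [Finset.mem_insert]
    rintro (rfl | h); exact hab rfl; exact hat (hpt h)
  rw [Finset.prod_insert hap, Finset.prod_insert hbp]; ring

lemma singlesWith_le (x : ℕ → ℝ) (hx : ∀ i, 0 ≤ x i) (a b c : ℕ) (t : Finset ℕ)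
    (hab : a ≠ b) (hac : a ≠ c) (hbc : b ≠ c)
    (hat : a ∉ t) (hbt : b ∉ t) (hct : c ∉ t) :
    ∑ e ∈ singlesWith a b c t, ∏ i ∈ e, x i
      ≤ x a * x b * x c * ∑ k ∈ t, x k := by
  refine le_trans (sum_image_le' (fun e => Finset.prod_nonneg fun i _ => hx i)) ?_
  rw [Finset.mul_sum]
  refine le_of_eq (Finset.sum_congr rfl fun k hk => ?_)
  have hak : a ≠ k := fun h => hat (h ▸ hk)
  have hbk : b ≠ k := fun h => hbt (h ▸ hk)
  have hck : c ≠ k := fun h => hct (h ▸ hk)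
  have h1 : a ∉ ({b, c, k} : Finset ℕ) := by simp [hab, hac, hak]
  have h2 : b ∉ ({c, k} : Finset ℕ) := by simp [hbc, hbk]
  have h3 : c ∉ ({k} : Finset ℕ) := by simp [hck]
  show ∏ i ∈ insert a ({b, c, k} : Finset ℕ), x i = _
  rw [Finset.prod_insert h1, Finset.prod_insert h2, Finset.prod_insert h3,
    Finset.prod_singleton]
  ring

lemma ineqA (u s : ℝ) (hu : 0 ≤ u) (hs : 0 ≤ s) :
    u^2*s/4 + u*s^2/3 + s^3/27 ≤ (u+s)^3/12 := by
  nlinarith [mul_nonneg hu (sq_nonneg (6*u - 5*s)), mul_nonneg hs (sq_nonneg (u - s)),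
    mul_nonneg hu (sq_nonneg u), mul_nonneg hs (sq_nonneg s),
    mul_nonneg (mul_nonneg hu hu) hs]

lemma ineqB (t : ℝ) (h0 : 0 ≤ t) (h1 : t ≤ 1) :
    t^2*(1-t)^2/8 + t*(1-t)^3/12 ≤ 1/64 := by
  nlinarith [sq_nonneg (2*t - 1), sq_nonneg (t - 3/8), mul_nonneg h0 (sub_nonneg.2 h1),
    sq_nonneg (2*t^2 - 1), mul_nonneg (mul_nonneg h0 h0) (sub_nonneg.2 h1),
    sq_nonneg (4*t^2 + 2*t - 3)]

lemma key (a b c d s w P Q T : ℝ) (ha : 0 ≤ a) (hb : 0 ≤ b) (hc : 0 ≤ c) (hd : 0 ≤ d)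
    (hw : 0 ≤ w) (hws : w ≤ s) (hsum : a + b + c + d + s = 1)
    (hP : 0 ≤ P) (hP2 : 2 * P ≤ (c + d + s)^2)
    (hQ : 0 ≤ Q) (hQ2 : 3 * Q ≤ w^2)
    (hT : 0 ≤ T) (hT2 : 27 * T ≤ w^3) :
    a*b*P + (a+b)*(c*d)*s + (a+b)*(c+d)*Q + a*T ≤ 1/64 := by
  have hs : 0 ≤ s := le_trans hw hws
  have hu : (0:ℝ) ≤ c + d := by linarith
  have ht : (0:ℝ) ≤ a + b := by linarith
  have hw3 : w^3 ≤ s^3 := pow_le_pow_left₀ hw hws 3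
  have hw2 : w^2 ≤ s^2 := pow_le_pow_left₀ hw hws 2
  have h1 : a*b*P ≤ a*b*((c+d+s)^2/2) :=
    mul_le_mul_of_nonneg_left (by linarith) (mul_nonneg ha hb)
  have h2 : (a+b)*(c*d)*s ≤ (a+b)*((c+d)^2/4)*s := by
    have hcd : c*d ≤ (c+d)^2/4 := by nlinarith [sq_nonneg (c-d)]
    exact mul_le_mul_of_nonneg_right (mul_le_mul_of_nonneg_left hcd ht) hs
  have h3 : (a+b)*(c+d)*Q ≤ (a+b)*(c+d)*(s^2/3) :=
    mul_le_mul_of_nonneg_left (by linarith) (mul_nonneg ht hu)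
  have h4 : a*T ≤ (a+b)*(s^3/27) := by
    have h1' : a*T ≤ a*(s^3/27) := mul_le_mul_of_nonneg_left (by linarith) ha
    have h2' : a*(s^3/27) ≤ (a+b)*(s^3/27) :=
      mul_le_mul_of_nonneg_right (by linarith) (by positivity)
    linarith
  have hab4 : a*b ≤ (a+b)^2/4 := by nlinarith [sq_nonneg (a-b)]
  have h5 : a*b*((c+d+s)^2/2) ≤ (a+b)^2*(c+d+s)^2/8 := by
    nlinarith [mul_le_mul_of_nonneg_right hab4 (by positivity : (0:ℝ) ≤ (c+d+s)^2/2)]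
  have hA := ineqA (c+d) s hu hs
  have h6 : (a+b)*((c+d)^2/4)*s + (a+b)*(c+d)*(s^2/3) + (a+b)*(s^3/27)
      ≤ (a+b)*((c+d+s)^3/12) := by
    have hmul := mul_le_mul_of_nonneg_left hA ht
    calc (a+b)*((c+d)^2/4)*s + (a+b)*(c+d)*(s^2/3) + (a+b)*(s^3/27)
        = (a+b)*((c+d)^2*s/4 + (c+d)*s^2/3 + s^3/27) := by ring
      _ ≤ (a+b)*((c+d+s)^3/12) := hmul
  have ht1 : a + b ≤ 1 := by linarith
  have hcds : c + d + s = 1 - (a+b) := by linarith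
  have hB := ineqB (a+b) ht ht1
  rw [hcds] at h1 h5 h6
  linarith

/-- For `n ≥ 8`, `λ(F₂) ≤ 1/64 < 0.0169`. -/
theorem lagrangian_F2 (n : ℕ) (hn : 8 ≤ n) :
    lagN n (F2 n) ≤ 1 / 64 ∧ (1 / 64 : ℝ) < 0.0169 := by
  constructor
  · apply Real.sSup_le _ (by norm_num)
    rintro v ⟨x, hx, hxsum, rfl⟩
    have hf : ∀ e : Finset ℕ, 0 ≤ ∏ i ∈ e, x i :=
      fun e => Finset.prod_nonneg fun i _ => hx i
    -- abbreviations
    set s : ℝ := ∑ i ∈ Finset.Icc 5 n, x i with hs_def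
    set P : ℝ := ∑ p ∈ (Finset.Icc 3 n).powersetCard 2, ∏ i ∈ p, x i with hP_def
    set Q : ℝ := ∑ p ∈ (Finset.Icc 5 7).powersetCard 2, ∏ i ∈ p, x i with hQ_def
    -- sum decompositions
    have hs0 : 0 ≤ s := Finset.sum_nonneg fun i _ => hx i
    have hsum14 : x 1 + x 2 + x 3 + x 4 + s = 1 := by
      have hun : Finset.Icc 1 n = Finset.Icc 1 4 ∪ Finset.Icc 5 n := by
        ext k; simp only [Finset.mem_Icc, Finset.mem_union]; omega
      have hdis : Disjoint (Finset.Icc 1 4) (Finset.Icc 5 n) := by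
        rw [Finset.disjoint_left]
        intro k h1 h2
        simp only [Finset.mem_Icc] at h1 h2; omega
      rw [hun, Finset.sum_union hdis,
        show Finset.Icc 1 4 = ({1,2,3,4} : Finset ℕ) from by decide,
        Finset.sum_insert (by decide), Finset.sum_insert (by decide),
        Finset.sum_insert (by decide), Finset.sum_singleton] at hxsum
      linarith
    have hsum34 : ∑ i ∈ Finset.Icc 3 n, x i = x 3 + x 4 + s := by
      have hun : Finset.Icc 3 n = Finset.Icc 3 4 ∪ Finset.Icc 5 n := by
        ext k; simp only [Finset.mem_Icc, Finset.mem_union]; omega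
      have hdis : Disjoint (Finset.Icc 3 4) (Finset.Icc 5 n) := by
        rw [Finset.disjoint_left]
        intro k h1 h2
        simp only [Finset.mem_Icc] at h1 h2; omega
      rw [hun, Finset.sum_union hdis,
        show Finset.Icc 3 4 = ({3,4} : Finset ℕ) from by decide,
        Finset.sum_insert (by decide), Finset.sum_singleton]
    -- w = x5 + x6 + x7 ≤ s
    have hw_eq : ∑ i ∈ Finset.Icc 5 7, x i = x 5 + x 6 + x 7 := by
      rw [show Finset.Icc 5 7 = ({5,6,7} : Finset ℕ) from by decide,
        Finset.sum_insert (by decide), Finset.sum_insert (by decide),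
        Finset.sum_singleton]
      ring
    have hw_le : x 5 + x 6 + x 7 ≤ s := by
      rw [← hw_eq, hs_def]
      exact Finset.sum_le_sum_of_subset_of_nonneg
        (Finset.Icc_subset_Icc_right (by omega)) (fun i _ _ => hx i)
    have hw0 : 0 ≤ x 5 + x 6 + x 7 := by
      have := hx 5; have := hx 6; have := hx 7; linarith
    -- P and Q facts
    have hP0 : 0 ≤ P := Finset.sum_nonneg fun p _ => hf p
    have hP2 : 2 * P ≤ (x 3 + x 4 + s)^2 := by
      have := e2_le x hx (Finset.Icc 3 n)
      rw [hsum34] at this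
      linarith
    have hQ_eq : Q = x 5 * x 6 + x 5 * x 7 + x 6 * x 7 := by
      rw [hQ_def, show (Finset.Icc 5 7).powersetCard 2
          = ({{5,6},{5,7},{6,7}} : Finset (Finset ℕ)) from by decide,
        Finset.sum_insert (by decide), Finset.sum_insert (by decide),
        Finset.sum_singleton,
        Finset.prod_insert (show (5:ℕ) ∉ ({6} : Finset ℕ) from by decide),
        Finset.prod_insert (show (5:ℕ) ∉ ({7} : Finset ℕ) from by decide),
        Finset.prod_insert (show (6:ℕ) ∉ ({7} : Finset ℕ) from by decide)]
      simp only [Finset.prod_singleton]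
      ring
    have hQ0 : 0 ≤ Q := Finset.sum_nonneg fun p _ => hf p
    have hQ2 : 3 * Q ≤ (x 5 + x 6 + x 7)^2 := by
      rw [hQ_eq]
      nlinarith [sq_nonneg (x 5 - x 6), sq_nonneg (x 5 - x 7), sq_nonneg (x 6 - x 7)]
    have hT0 : 0 ≤ x 5 * x 6 * x 7 :=
      mul_nonneg (mul_nonneg (hx 5) (hx 6)) (hx 7)
    have hT2 : 27 * (x 5 * x 6 * x 7) ≤ (x 5 + x 6 + x 7)^3 := by
      nlinarith [mul_nonneg (hx 5) (sq_nonneg (x 6 - x 7)),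
        mul_nonneg (hx 6) (sq_nonneg (x 5 - x 7)),
        mul_nonneg (hx 7) (sq_nonneg (x 5 - x 6)), hT0]
    -- per-family bounds
    have hIcc3 : ∀ k : ℕ, k ∈ Finset.Icc 3 n → 3 ≤ k := fun k hk =>
      (Finset.mem_Icc.1 hk).1
    have hb1 : ∑ e ∈ pairsWith 1 2 (Finset.Icc 3 n), ∏ i ∈ e, x i ≤ x 1 * x 2 * P :=
      pairsWith_le x hx 1 2 _ (by norm_num)
        (by simp [Finset.mem_Icc]) (by simp [Finset.mem_Icc])
    have hb2 : ∑ e ∈ singlesWith 1 3 4 (Finset.Icc 5 n), ∏ i ∈ e, x i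
        ≤ x 1 * x 3 * x 4 * s :=
      singlesWith_le x hx 1 3 4 _ (by norm_num) (by norm_num) (by norm_num)
        (by simp [Finset.mem_Icc]) (by simp [Finset.mem_Icc]) (by simp [Finset.mem_Icc])
    have hb3 : ∑ e ∈ pairsWith 1 3 (Finset.Icc 5 7), ∏ i ∈ e, x i ≤ x 1 * x 3 * Q :=
      pairsWith_le x hx 1 3 _ (by norm_num) (by decide) (by decide)
    have hb4 : ∑ e ∈ pairsWith 1 4 (Finset.Icc 5 7), ∏ i ∈ e, x i ≤ x 1 * x 4 * Q :=
      pairsWith_le x hx 1 4 _ (by norm_num) (by decide) (by decide)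
    have hb5 : ∑ e ∈ ({({1,5,6,7} : Finset ℕ)} : Finset (Finset ℕ)), ∏ i ∈ e, x i
        = x 1 * (x 5 * x 6 * x 7) := by
      rw [Finset.sum_singleton,
        show ({1,5,6,7} : Finset ℕ) = insert 1 (insert 5 (insert 6 {7})) from rfl,
        Finset.prod_insert (by decide), Finset.prod_insert (by decide),
        Finset.prod_insert (by decide), Finset.prod_singleton]
      ring
    have hb6 : ∑ e ∈ singlesWith 2 3 4 (Finset.Icc 5 n), ∏ i ∈ e, x i
        ≤ x 2 * x 3 * x 4 * s :=
      singlesWith_le x hx 2 3 4 _ (by norm_num) (by norm_num) (by norm_num)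
        (by simp [Finset.mem_Icc]) (by simp [Finset.mem_Icc]) (by simp [Finset.mem_Icc])
    have hb7 : ∑ e ∈ pairsWith 2 3 (Finset.Icc 5 7), ∏ i ∈ e, x i ≤ x 2 * x 3 * Q :=
      pairsWith_le x hx 2 3 _ (by norm_num) (by decide) (by decide)
    have hb8 : ∑ e ∈ pairsWith 2 4 (Finset.Icc 5 7), ∏ i ∈ e, x i ≤ x 2 * x 4 * Q :=
      pairsWith_le x hx 2 4 _ (by norm_num) (by decide) (by decide)
    -- split the union
    have step : ∀ (u v : Finset (Finset ℕ)),
        ∑ e ∈ u ∪ v, ∏ i ∈ e, x i ≤ ∑ e ∈ u, ∏ i ∈ e, x i + ∑ e ∈ v, ∏ i ∈ e, x i :=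
      fun u v => sum_union_le' hf
    have hsplit : ∑ e ∈ F2 n, ∏ i ∈ e, x i
        ≤ ∑ e ∈ pairsWith 1 2 (Finset.Icc 3 n), ∏ i ∈ e, x i
          + ∑ e ∈ singlesWith 1 3 4 (Finset.Icc 5 n), ∏ i ∈ e, x i
          + ∑ e ∈ pairsWith 1 3 (Finset.Icc 5 7), ∏ i ∈ e, x i
          + ∑ e ∈ pairsWith 1 4 (Finset.Icc 5 7), ∏ i ∈ e, x i
          + ∑ e ∈ ({({1,5,6,7} : Finset ℕ)} : Finset (Finset ℕ)), ∏ i ∈ e, x i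
          + ∑ e ∈ singlesWith 2 3 4 (Finset.Icc 5 n), ∏ i ∈ e, x i
          + ∑ e ∈ pairsWith 2 3 (Finset.Icc 5 7), ∏ i ∈ e, x i
          + ∑ e ∈ pairsWith 2 4 (Finset.Icc 5 7), ∏ i ∈ e, x i := by
      unfold F2
      refine le_trans (step _ _) ?_
      refine add_le_add ?_ le_rfl
      refine le_trans (step _ _) ?_
      refine add_le_add ?_ le_rfl
      refine le_trans (step _ _) ?_
      refine add_le_add ?_ le_rfl
      refine le_trans (step _ _) ?_
      refine add_le_add ?_ le_rfl
      refine le_trans (step _ _) ?_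
      refine add_le_add ?_ le_rfl
      refine le_trans (step _ _) ?_
      refine add_le_add ?_ le_rfl
      exact step _ _
    have hkey := key (x 1) (x 2) (x 3) (x 4) s (x 5 + x 6 + x 7) P Q (x 5 * x 6 * x 7)
      (hx 1) (hx 2) (hx 3) (hx 4) hw0 hw_le hsum14 hP0 hP2 hQ0 hQ2 hT0 hT2
    have hmatch : x 1 * x 2 * P + x 1 * x 3 * x 4 * s + x 1 * x 3 * Q + x 1 * x 4 * Q
        + x 1 * (x 5 * x 6 * x 7) + x 2 * x 3 * x 4 * s + x 2 * x 3 * Q + x 2 * x 4 * Q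
        = x 1 * x 2 * P + (x 1 + x 2) * (x 3 * x 4) * s
          + (x 1 + x 2) * (x 3 + x 4) * Q + x 1 * (x 5 * x 6 * x 7) := by ring
    linarith
  · norm_num
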